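/- Monotone policy improvement implies nonnegative weighted advantage: Let ρ be a nonnegative weight vector over states, and for each state s let π_{k+1}(·|s) maximize p ↦ η G(s,·)·p − D(p, π_k(·|s)) over a convex set of distributions containing π_k(·|s), where D is a Bregman divergence. Then Σ_a G(s,a)(π_k(a|s) − π_{k+1}(a|s)) ≤ −(1/η)[D(π_{k+1}(·|s), π_k(·|s)) + D(π_k(·|s), π_{k+1}(·|s))] ≤ 0 for every s. -/

import Mathlib

open Finset

section aux

variable {A : Type*} [Fintype A]

private lemma aux_hasDerivAt (h : EuclideanSpace ℝ A → ℝ) (hdiff : Differentiable ℝ h)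
    (x v : EuclideanSpace ℝ A) :
    HasDerivAt (fun t : ℝ => h (x + t • v)) (inner ℝ (gradient h x) v : ℝ) 0 := by
  have h1 : HasDerivAt (fun t : ℝ => x + t • v) v 0 := by
    simpa using ((hasDerivAt_id (0 : ℝ)).smul_const v).const_add x
  have h2 : HasFDerivAt h (InnerProductSpace.toDual ℝ _ (gradient h x)) ((fun t : ℝ => x + t • v) 0) := by
    simpa using (hdiff x).hasGradientAt.hasFDerivAt
  have := h2.comp_hasDerivAt 0 h1
  simpa [Function.comp_def, InnerProductSpace.toDual_apply_apply] using this

private lemma aux_slope_le {φ : ℝ → ℝ} {d c : ℝ} (hφ : HasDerivAt φ d 0)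
    (hc : ∀ t ∈ Set.Ioc (0:ℝ) 1, c * t ≤ φ t - φ 0) : c ≤ d := by
  have hs := hasDerivAt_iff_tendsto_slope.mp hφ
  have h2 : Filter.Tendsto (slope φ 0) (nhdsWithin 0 (Set.Ioi 0)) (nhds d) :=
    hs.mono_left (nhdsWithin_mono 0 (fun t ht => ne_of_gt ht))
  refine ge_of_tendsto h2 ?_
  filter_upwards [Ioc_mem_nhdsGT_of_mem (by norm_num : (0:ℝ) ∈ Set.Ico 0 1)] with t ht
  rw [slope_def_field, le_div_iff₀ (by simpa using ht.1)]
  simpa using hc t ht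

private lemma aux_slope_ge {φ : ℝ → ℝ} {d c : ℝ} (hφ : HasDerivAt φ d 0)
    (hc : ∀ t ∈ Set.Ioc (0:ℝ) 1, φ t - φ 0 ≤ c * t) : d ≤ c := by
  have := aux_slope_le (c := -c) hφ.neg (fun t ht => by
    have := hc t ht; simp only [neg_mul, Pi.neg_apply]; linarith)
  linarith

/-- Gradient inequality for convex differentiable functions. -/
private lemma aux_grad_ineq (h : EuclideanSpace ℝ A → ℝ)
    (hconv : ConvexOn ℝ Set.univ h) (hdiff : Differentiable ℝ h)
    (x y : EuclideanSpace ℝ A) :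
    (inner ℝ (gradient h x) (y - x) : ℝ) ≤ h y - h x := by
  refine aux_slope_ge (aux_hasDerivAt h hdiff x (y - x)) (fun t ht => ?_)
  have hx : x + t • (y - x) = (1 - t) • x + t • y := by
    module
  have := hconv.2 (Set.mem_univ x) (Set.mem_univ y)
    (by linarith [ht.2] : (0:ℝ) ≤ 1 - t) (le_of_lt ht.1) (by ring)
  rw [hx]
  simp only [smul_eq_mul] at this
  calc h ((1 - t) • x + t • y) - h (x + (0:ℝ) • (y - x))
      ≤ (1 - t) * h x + t * h y - h x := by simpa using this
    _ = (h y - h x) * t := by ring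

end aux

/-- Monotone policy improvement implies nonnegative weighted advantage: the mirror
ascent update satisfies
`∑ₐ G(s,a)(π_k(a|s) − π_{k+1}(a|s)) ≤ −(1/η)[D(π_{k+1},π_k) + D(π_k,π_{k+1})] ≤ 0`. -/
theorem mirror_ascent_improvement {S A : Type*} [Fintype S] [Fintype A]
    (h : EuclideanSpace ℝ A → ℝ)
    (hconv : StrictConvexOn ℝ Set.univ h)
    (hdiff : Differentiable ℝ h)
    (D : EuclideanSpace ℝ A → EuclideanSpace ℝ A → ℝ)
    (hD : ∀ p q, D p q = h p - h q - (inner ℝ (gradient h q) (p - q) : ℝ))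
    (K : Set (EuclideanSpace ℝ A)) (hK : Convex ℝ K) (hKclosed : IsClosed K)
    (hKsimplex : ∀ p ∈ K, (∀ a, 0 ≤ p a) ∧ ∑ a, p a = 1)
    (G : S → A → ℝ) (η : ℝ) (hη : 0 < η)
    (πk πk1 : S → EuclideanSpace ℝ A)
    (hπk : ∀ s, πk s ∈ K) (hπk1 : ∀ s, πk1 s ∈ K)
    (hmax : ∀ s, IsMaxOn (fun p => η * ∑ a, G s a * p a - D p (πk s)) K (πk1 s)) :
    ∀ s, ∑ a, G s a * (πk s a - πk1 s a) ≤
          -(1 / η) * (D (πk1 s) (πk s) + D (πk s) (πk1 s)) ∧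
        -(1 / η) * (D (πk1 s) (πk s) + D (πk s) (πk1 s)) ≤ 0 := by
  intro s
  set x := πk1 s with hx
  set y := πk s with hy
  set v : EuclideanSpace ℝ A := y - x with hv
  -- nonnegativity of D
  have hDnn : ∀ p q, 0 ≤ D p q := fun p q => by
    have := aux_grad_ineq h hconv.convexOn hdiff q p
    rw [hD]; linarith
  -- first-order optimality: c ≤ ⟪∇h x, v⟫
  set c : ℝ := η * ∑ a, G s a * v a + (inner ℝ (gradient h y) v : ℝ) with hc
  have key : c ≤ (inner ℝ (gradient h x) v : ℝ) := by
    refine aux_slope_le (aux_hasDerivAt h hdiff x v) (fun t ht => ?_)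
    have hmem : x + t • v ∈ K := by
      have hcomb : x + t • v = (1 - t) • x + t • y := by rw [hv]; module
      rw [hcomb]
      exact hK (hπk1 s) (hπk s) (by linarith [ht.2]) (le_of_lt ht.1) (by ring)
    have := hmax s hmem
    simp only [Set.mem_setOf_eq] at this
    -- expand
    have happ : ∀ a, (x + t • v) a = x a + t * v a := fun a => by
      simp [PiLp.add_apply, PiLp.smul_apply, smul_eq_mul]
    have hsum : ∑ a, G s a * (x + t • v) a
        = ∑ a, G s a * x a + t * ∑ a, G s a * v a := by
      rw [Finset.mul_sum, ← Finset.sum_add_distrib]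
      exact Finset.sum_congr rfl (fun a _ => by rw [happ a]; ring)
    have hinner : (inner ℝ (gradient h y) ((x + t • v) - y) : ℝ)
        = (inner ℝ (gradient h y) (x - y) : ℝ) + t * (inner ℝ (gradient h y) v : ℝ) := by
      have : (x + t • v) - y = (x - y) + t • v := by module
      rw [this, inner_add_right, real_inner_smul_right]
    rw [hD, hD, hsum] at this
    rw [hinner] at this
    have hφ : h (x + t • v) - h (x + (0:ℝ) • v) = h (x + t • v) - h x := by
      norm_num
    rw [hφ, hc]
    nlinarith [this]
  -- three point identity
  have h3 : (inner ℝ (gradient h x) v : ℝ) - (inner ℝ (gradient h y) v : ℝ)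
      = - D y x - D x y := by
    have e1 : D y x = h y - h x - (inner ℝ (gradient h x) v : ℝ) := by
      rw [hD, hv]
    have e2 : D x y = h x - h y - (inner ℝ (gradient h y) (x - y) : ℝ) := hD x y
    have e3 : (inner ℝ (gradient h y) (x - y) : ℝ) = - (inner ℝ (gradient h y) v : ℝ) := by
      rw [hv, show x - y = -(y - x) by module, inner_neg_right]
    rw [e1, e2, e3]; ring
  have hmain : η * ∑ a, G s a * v a ≤ - D y x - D x y := by
    rw [← h3]; rw [hc] at key; linarith
  have hveq : ∀ a, v a = y a - x a := fun a => by
    rw [hv]; simp [PiLp.sub_apply]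
  have hsumv : ∑ a, G s a * (y a - x a) = ∑ a, G s a * v a :=
    Finset.sum_congr rfl (fun a _ => by rw [hveq a])
  constructor
  · rw [hsumv]
    have hstep : ∑ a, G s a * v a ≤ (- D y x - D x y) / η := by
      rw [le_div_iff₀ hη]; nlinarith [hmain]
    calc ∑ a, G s a * v a ≤ (- D y x - D x y) / η := hstep
      _ = -(1 / η) * (D x y + D y x) := by field_simp; ring
  · have h1 := hDnn x y
    have h2 := hDnn y x
    have : 0 ≤ D x y + D y x := by linarith
    rw [neg_mul, neg_nonpos]
    positivity
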